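/- Let f : ℝ → ℂ be continuous and let k > 0 be such that for every complex Hilbert space H and all bounded self-adjoint operators A, B on H one has ‖f(B) − f(A)‖ ≤ k·‖(B − A)(A + iI)⁻¹‖. Then for all s, t ∈ ℝ, |f(s) − f(t)| ≤ k·|s − t|/|t + i|; in particular |f(s) − f(t)| ≤ √2·k·|s − t|·(1 + |t|)⁻¹ for all s, t ∈ ℝ. -/

import Mathlib

open Complex

/-- Functional calculus `f(A)` for a continuous `f : ℝ → ℂ` and a (self-adjoint, hence
normal) bounded operator `A`, obtained by applying `z ↦ f (Re z)` to `A` via the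
continuous functional calculus. -/
noncomputable def opFC {H : Type*} [NormedAddCommGroup H] [InnerProductSpace ℂ H]
    [CompleteSpace H] (f : ℝ → ℂ) (A : H →L[ℂ] H) : H →L[ℂ] H :=
  cfc (fun z : ℂ => f z.re) A

noncomputable instance : Inner ℂ (ULift.{u} ℂ) := ⟨fun x y => inner ℂ x.down y.down⟩

noncomputable instance : InnerProductSpace ℂ (ULift.{u} ℂ) where
  norm_sq_eq_re_inner x := InnerProductSpace.norm_sq_eq_re_inner (𝕜 := ℂ) x.down
  conj_inner_symm x y := inner_conj_symm (𝕜 := ℂ) x.down y.down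
  add_left x y z := inner_add_left (𝕜 := ℂ) x.down y.down z.down
  smul_left x y r := inner_smul_left x.down y.down r

/-- Necessity part of Theorem 2.4: if `f` is continuous and
`‖f(B) − f(A)‖ ≤ k ‖(B − A)(A + iI)⁻¹‖` for all bounded self-adjoint operators `A, B`
on every complex Hilbert space, then `|f s − f t| ≤ k |s − t| / |t + i|`, and in
particular `|f s − f t| ≤ √2 · k · |s − t| · (1 + |t|)⁻¹`, for all `s, t ∈ ℝ`. -/
theorem stmt1 (f : ℝ → ℂ) (hf : Continuous f) (k : ℝ) (hk : 0 < k)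
    (h : ∀ (H : Type u) (_ : NormedAddCommGroup H) (_ : InnerProductSpace ℂ H)
      (_ : CompleteSpace H) (A B : H →L[ℂ] H), IsSelfAdjoint A → IsSelfAdjoint B →
      ‖opFC f B - opFC f A‖ ≤ k * ‖(B - A) * Ring.inverse (A + Complex.I • 1)‖) :
    ∀ s t : ℝ,
      ‖f s - f t‖ ≤ k * |s - t| / ‖(t : ℂ) + I‖ ∧
      ‖f s - f t‖ ≤ Real.sqrt 2 * k * |s - t| * (1 + |t|)⁻¹ := by
  intro s t
  set E := ULift.{u} ℂ with hE
  have hsa : ∀ r : ℝ, IsSelfAdjoint (algebraMap ℂ (E →L[ℂ] E) (r : ℂ)) := fun r =>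
    IsSelfAdjoint.algebraMap _ (by simp [IsSelfAdjoint, star_def, Complex.conj_ofReal])
  have key := h E inferInstance inferInstance inferInstance
    (algebraMap ℂ _ (t : ℂ)) (algebraMap ℂ _ (s : ℂ)) (hsa t) (hsa s)
  have hfc : ∀ r : ℝ, opFC f (algebraMap ℂ (E →L[ℂ] E) (r : ℂ))
      = algebraMap ℂ (E →L[ℂ] E) (f r) := by
    intro r
    rw [opFC, cfc_algebraMap]
    simp
  have htI : ((t : ℂ) + I) ≠ 0 := by
    intro hc
    have := congrArg Complex.im hc
    simp at this
  have h1 : (algebraMap ℂ (E →L[ℂ] E) (t : ℂ)) + Complex.I • 1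
      = algebraMap ℂ (E →L[ℂ] E) ((t : ℂ) + I) := by
    rw [map_add, Algebra.algebraMap_eq_smul_one, Algebra.algebraMap_eq_smul_one]
  have hinv : Ring.inverse (algebraMap ℂ (E →L[ℂ] E) ((t : ℂ) + I))
      = algebraMap ℂ (E →L[ℂ] E) ((t : ℂ) + I)⁻¹ := by
    let u : (E →L[ℂ] E)ˣ :=
      ⟨algebraMap ℂ _ ((t : ℂ) + I), algebraMap ℂ _ ((t : ℂ) + I)⁻¹,
        by rw [← map_mul, mul_inv_cancel₀ htI, map_one],
        by rw [← map_mul, inv_mul_cancel₀ htI, map_one]⟩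
    exact Ring.inverse_unit u
  rw [hfc, hfc, ← map_sub, h1, hinv, ← map_sub, ← map_mul,
    norm_algebraMap', norm_algebraMap', norm_mul, norm_inv,
    ← Complex.ofReal_sub, Complex.norm_real, Real.norm_eq_abs] at key
  have hnorm_pos : 0 < ‖(t : ℂ) + I‖ := norm_pos_iff.mpr htI
  constructor
  · calc ‖f s - f t‖ ≤ k * (|s - t| * ‖(t : ℂ) + I‖⁻¹) := key
      _ = k * |s - t| / ‖(t : ℂ) + I‖ := by ring
  · have hn : ‖(t : ℂ) + I‖ = Real.sqrt (t ^ 2 + 1) := by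
      rw [Complex.norm_def]
      congr 1
      simp [Complex.normSq_apply]
      ring
    have hlow : (1 + |t|) ≤ ‖(t : ℂ) + I‖ * Real.sqrt 2 := by
      rw [hn, ← Real.sqrt_mul (by positivity)]
      rw [show (1 + |t|) = Real.sqrt ((1 + |t|) ^ 2) from
        (Real.sqrt_sq (by positivity)).symm]
      apply Real.sqrt_le_sqrt
      nlinarith [_root_.sq_abs t, sq_nonneg (|t| - 1)]
    have hinv2 : ‖(t : ℂ) + I‖⁻¹ ≤ Real.sqrt 2 / (1 + |t|) := by
      rw [inv_le_comm₀ hnorm_pos (by positivity), inv_div, div_le_iff₀ (by positivity)]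
      exact hlow
    calc ‖f s - f t‖ ≤ k * (|s - t| * ‖(t : ℂ) + I‖⁻¹) := key
      _ ≤ k * (|s - t| * (Real.sqrt 2 / (1 + |t|))) := by
          apply mul_le_mul_of_nonneg_left _ hk.le
          exact mul_le_mul_of_nonneg_left hinv2 (abs_nonneg _)
      _ = Real.sqrt 2 * k * |s - t| * (1 + |t|)⁻¹ := by
          rw [div_eq_mul_inv]
          ring
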